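/- Let φ = (5/12)z(z²−1) + z(λ₁λ₂+λ₂λ₃+λ₃λ₁) with λ₁ = 1−x−y, λ₂ = x, λ₃ = y, and let F₁ be the side face of the reference prism with vertices V₂=(1,0,-1), V₃=(0,1,-1), V₆=(0,1,1), V₅=(1,0,1), i.e. F₁ = {(x,y,z) : x+y = 1, 0 ≤ x ≤ 1, -1 ≤ z ≤ 1}. Let ξ₁ be the affine function on F₁ with ξ₁(V₃) = ξ₁(V₆) = 1 and ξ₁(V₂) = ξ₁(V₅) = −1 (namely ξ₁ = y − x on F₁). Then ∫_{F₁} φ ξ₁ dσ = 0. -/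
import Mathlib


noncomputable section

def phi (x y z : ℝ) : ℝ :=
  (5/12) * z * (z^2 - 1) + z * ((1-x-y)*x + x*y + y*(1-x-y))

/-- On the side face `F₁ = {x+y=1, 0 ≤ x ≤ 1, -1 ≤ z ≤ 1}` (parametrized by
`(x,z)` with surface element `dσ = √2 dx dz`), with `ξ₁ = y − x`,
the surface integral `∫_{F₁} φ ξ₁ dσ` vanishes. -/
theorem phi_xi_integral_zero :
    Real.sqrt 2 * (∫ x in (0:ℝ)..1, ∫ z in (-1:ℝ)..1,
      phi x (1-x) z * ((1-x) - x)) = 0 := by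
  have h : ∀ x : ℝ, (∫ z in (-1:ℝ)..1, phi x (1-x) z * ((1-x) - x)) = 0 := by
    intro x
    have heq : (fun z : ℝ => phi x (1-x) z * ((1-x) - x)) =
        fun z : ℝ => (5/12 * ((1-x)-x)) * z^3 +
          (((1-x-(1-x))*x + x*(1-x) + (1-x)*(1-x-(1-x)) - 5/12) * ((1-x)-x)) * z := by
      funext z; simp only [phi]; ring
    rw [heq]
    rw [intervalIntegral.integral_add (Continuous.intervalIntegrable (by continuity) _ _)
      (Continuous.intervalIntegrable (by continuity) _ _)]
    rw [intervalIntegral.integral_const_mul, intervalIntegral.integral_const_mul,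
      integral_pow, integral_id]
    norm_num
  simp [h]
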